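/- Let k1 < k2 be positive integers, θ1, θ2, r1, r2 real numbers, and v(x) = r1·cos(k1(x+θ1)) + r2·cos(k2(x+θ2)). If r1 ≠ 0, r2 ≠ 0, and k1·k2·(θ1 − θ2) ∉ π·ℤ, then v is asymmetric, i.e., there is no a ∈ ℝ such that x ↦ v(x+a) is even. -/

import Mathlib

open Real

private lemma sin_comb_deriv (b1 b2 c1 c2 : ℝ) (x : ℝ) :
    HasDerivAt (fun y => c1 * Real.sin (b1 * y) + c2 * Real.sin (b2 * y))
      (c1 * b1 * Real.cos (b1 * x) + c2 * b2 * Real.cos (b2 * x)) x := by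
  have h1 : HasDerivAt (fun y => c1 * Real.sin (b1 * y)) (c1 * (Real.cos (b1 * x) * (b1 * 1))) x :=
    (((Real.hasDerivAt_sin (b1 * x)).comp x ((hasDerivAt_id x).const_mul b1))).const_mul c1
  have h2 : HasDerivAt (fun y => c2 * Real.sin (b2 * y)) (c2 * (Real.cos (b2 * x) * (b2 * 1))) x :=
    (((Real.hasDerivAt_sin (b2 * x)).comp x ((hasDerivAt_id x).const_mul b2))).const_mul c2
  have := h1.add h2
  exact this.congr_deriv (by ring)

private lemma cos_comb_deriv (b1 b2 c1 c2 : ℝ) (x : ℝ) :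
    HasDerivAt (fun y => c1 * Real.cos (b1 * y) + c2 * Real.cos (b2 * y))
      (-(c1 * b1 * Real.sin (b1 * x)) + -(c2 * b2 * Real.sin (b2 * x))) x := by
  have h1 : HasDerivAt (fun y => c1 * Real.cos (b1 * y)) (c1 * (-Real.sin (b1 * x) * (b1 * 1))) x :=
    (((Real.hasDerivAt_cos (b1 * x)).comp x ((hasDerivAt_id x).const_mul b1))).const_mul c1
  have h2 : HasDerivAt (fun y => c2 * Real.cos (b2 * y)) (c2 * (-Real.sin (b2 * x) * (b2 * 1))) x :=
    (((Real.hasDerivAt_cos (b2 * x)).comp x ((hasDerivAt_id x).const_mul b2))).const_mul c2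
  have := h1.add h2
  exact this.congr_deriv (by ring)

private lemma zero_deriv {f : ℝ → ℝ} (hf : ∀ x, f x = 0) {d x : ℝ}
    (h : HasDerivAt f d x) : d = 0 := by
  have hf' : f = fun _ => (0:ℝ) := funext hf
  rw [hf'] at h
  exact h.unique (hasDerivAt_const x 0)

private lemma sin_lin_indep (b1 b2 c1 c2 : ℝ) (hb : b1 ^ 2 ≠ b2 ^ 2)
    (hb1 : b1 ≠ 0) (hb2 : b2 ≠ 0)
    (h : ∀ x, c1 * Real.sin (b1 * x) + c2 * Real.sin (b2 * x) = 0) :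
    c1 = 0 ∧ c2 = 0 := by
  -- first derivative is 0 everywhere
  have h1 : ∀ x, c1 * b1 * Real.cos (b1 * x) + c2 * b2 * Real.cos (b2 * x) = 0 := by
    intro x
    exact zero_deriv h (sin_comb_deriv b1 b2 c1 c2 x)
  -- second derivative is 0 everywhere
  have h2 : ∀ x, -(c1 * b1 * b1 * Real.sin (b1 * x)) + -(c2 * b2 * b2 * Real.sin (b2 * x)) = 0 := by
    intro x
    have := zero_deriv h1 (cos_comb_deriv b1 b2 (c1 * b1) (c2 * b2) x)
    linarith [this]
  -- c1 * (b2^2 - b1^2) * sin (b1 * x) = 0 for all x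
  have hc1 : c1 = 0 := by
    have key := h (Real.pi / 2 / b1)
    have key2 := h2 (Real.pi / 2 / b1)
    have hs : Real.sin (b1 * (Real.pi / 2 / b1)) = 1 := by
      rw [mul_div_cancel₀ _ hb1]
      · exact Real.sin_pi_div_two
    rw [hs] at key key2
    have hne : b2 ^ 2 - b1 ^ 2 ≠ 0 := sub_ne_zero.mpr (Ne.symm hb)
    have : c1 * (b2 ^ 2 - b1 ^ 2) = 0 := by nlinarith [key, key2]
    exact (mul_eq_zero.mp this).resolve_right hne
  have hc2 : c2 = 0 := by
    have key := h (Real.pi / 2 / b2)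
    have hs : Real.sin (b2 * (Real.pi / 2 / b2)) = 1 := by
      rw [mul_div_cancel₀ _ hb2]
      · exact Real.sin_pi_div_two
    rw [hc1, hs] at key
    linarith
  exact ⟨hc1, hc2⟩

theorem two_mode_asymmetric (k1 k2 : ℕ) (hk1 : 0 < k1) (hk : k1 < k2)
    (r1 r2 θ1 θ2 : ℝ) (hr1 : r1 ≠ 0) (hr2 : r2 ≠ 0)
    (hθ : ¬ ∃ n : ℤ, (k1 : ℝ) * k2 * (θ1 - θ2) = n * Real.pi) :
    ¬ ∃ a : ℝ, ∀ x : ℝ,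
      (r1 * Real.cos (k1 * ((-x + a) + θ1)) + r2 * Real.cos (k2 * ((-x + a) + θ2))) =
      (r1 * Real.cos (k1 * ((x + a) + θ1)) + r2 * Real.cos (k2 * ((x + a) + θ2))) := by
  rintro ⟨a, H⟩
  have hk1' : (k1 : ℝ) ≠ 0 := Nat.cast_ne_zero.mpr hk1.ne'
  have hk2' : (k2 : ℝ) ≠ 0 := Nat.cast_ne_zero.mpr (hk1.trans hk).ne'
  set c1 := r1 * Real.sin ((k1 : ℝ) * (a + θ1)) with hc1def
  set c2 := r2 * Real.sin ((k2 : ℝ) * (a + θ2)) with hc2def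
  have h : ∀ x, c1 * Real.sin ((k1 : ℝ) * x) + c2 * Real.sin ((k2 : ℝ) * x) = 0 := by
    intro x
    have Hx := H x
    have e1 : (k1 : ℝ) * ((-x + a) + θ1) = (k1 : ℝ) * (a + θ1) - (k1 : ℝ) * x := by ring
    have e2 : (k2 : ℝ) * ((-x + a) + θ2) = (k2 : ℝ) * (a + θ2) - (k2 : ℝ) * x := by ring
    have e3 : (k1 : ℝ) * ((x + a) + θ1) = (k1 : ℝ) * (a + θ1) + (k1 : ℝ) * x := by ring
    have e4 : (k2 : ℝ) * ((x + a) + θ2) = (k2 : ℝ) * (a + θ2) + (k2 : ℝ) * x := by ring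
    rw [e1, e2, e3, e4, Real.cos_sub, Real.cos_sub, Real.cos_add, Real.cos_add] at Hx
    rw [hc1def, hc2def]
    nlinarith [Hx]
  have hsq : ((k1 : ℝ)) ^ 2 ≠ ((k2 : ℝ)) ^ 2 := by
    have h12 : (k1 : ℝ) < (k2 : ℝ) := by exact_mod_cast hk
    have h1p : (0:ℝ) < (k1 : ℝ) := by exact_mod_cast hk1
    nlinarith
  obtain ⟨hc1, hc2⟩ := sin_lin_indep _ _ _ _ hsq hk1' hk2' h
  have hs1 : Real.sin ((k1 : ℝ) * (a + θ1)) = 0 := by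
    rcases mul_eq_zero.mp hc1 with h' | h'
    · exact absurd h' hr1
    · exact h'
  have hs2 : Real.sin ((k2 : ℝ) * (a + θ2)) = 0 := by
    rcases mul_eq_zero.mp hc2 with h' | h'
    · exact absurd h' hr2
    · exact h'
  obtain ⟨m, hm⟩ := Real.sin_eq_zero_iff.mp hs1
  obtain ⟨n, hn⟩ := Real.sin_eq_zero_iff.mp hs2
  apply hθ
  refine ⟨k2 * m - k1 * n, ?_⟩
  have : (k1 : ℝ) * k2 * (θ1 - θ2) =
      (k2 : ℝ) * ((k1 : ℝ) * (a + θ1)) - (k1 : ℝ) * ((k2 : ℝ) * (a + θ2)) := by ring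
  rw [this, ← hm, ← hn]
  push_cast
  ring
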